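/- Let δ, μ, q > 0 and let n be a nonnegative integer. The termination condition η + 1 - √(η² + v/q) = -n, with η = √(-2E)/δ and v = 2μ/δ², holds if and only if E = -(1/2)(μ/(qδ(n+1)) - δ(n+1)/2)², provided 2μ > qδ²(n+1)² (so that η > 0). -/
import Mathlib


open Real

theorem hulthen_termination_condition (μ δ q : ℝ) (hμ : 0 < μ) (hδ : 0 < δ) (hq : 0 < q)
    (n : ℕ) (hcond : 2*μ > q*δ^2*((n:ℝ)+1)^2)
    (E η v : ℝ) (hη : η = Real.sqrt (-2*E) / δ) (hv : v = 2*μ/δ^2) :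
    η + 1 - Real.sqrt (η^2 + v/q) = -(n:ℝ) ↔
      E = -(1/2) * (μ/(q*δ*((n:ℝ)+1)) - δ*((n:ℝ)+1)/2)^2 := by
  set N : ℝ := (n:ℝ) + 1 with hN
  have hN0 : 0 < N := by positivity
  set A : ℝ := μ/(q*δ*N) - δ*N/2 with hA
  have hA0 : 0 < A := by
    rw [hA]
    rw [gt_iff_lt] at hcond
    have : δ*N/2 < μ/(q*δ*N) := by
      rw [div_lt_div_iff₀ (by norm_num) (by positivity)]
      nlinarith
    linarith
  have hvq : v/q = 2*μ/(δ^2*q) := by rw [hv]; ring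
  have hvqN : N^2 < v/q := by
    rw [hvq, lt_div_iff₀ (by positivity)]
    nlinarith
  have hηnn : 0 ≤ η := by rw [hη]; positivity
  constructor
  · intro h
    -- sqrt(η²+v/q) = η + N
    have hs : Real.sqrt (η^2 + v/q) = η + N := by
      rw [hN]; linarith
    have hsq : η^2 + v/q = (η + N)^2 := by
      have := Real.sq_sqrt (by nlinarith [sq_nonneg η, sq_nonneg N] : (0:ℝ) ≤ η^2 + v/q)
      rw [hs] at this
      linarith [this]
    have hvq2 : v/q = 2*η*N + N^2 := by linear_combination hsq
    have hηpos : 0 < η := by nlinarith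
    rw [hvq] at hvq2
    have hδη : δ * η = A := by
      rw [hA]
      field_simp
      field_simp at hvq2
      rw [hN] at hvq2
      linear_combination -hvq2
    have hsE : Real.sqrt (-2*E) = δ * η := by
      rw [hη]; field_simp
    have hEpos : 0 < -2*E := by
      by_contra hc
      push_neg at hc
      have h0 : Real.sqrt (-2*E) = 0 := Real.sqrt_eq_zero'.mpr hc
      rw [h0] at hsE
      nlinarith
    have h2E : -2*E = (δ*η)^2 := by
      rw [← hsE]; exact (Real.sq_sqrt hEpos.le).symm
    rw [hδη] at h2E
    linear_combination (-1/2) * h2E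
  · intro hE
    have hsE : Real.sqrt (-2*E) = A := by
      rw [hE]
      have : -2 * (-(1/2) * A^2) = A^2 := by ring
      rw [this, Real.sqrt_sq hA0.le]
    have hηA : η = A/δ := by rw [hη, hsE]
    have hsq : η^2 + v/q = (η + N)^2 := by
      rw [hηA, hvq, hA]
      field_simp
      ring
    rw [hsq, Real.sqrt_sq (by positivity)]
    rw [hN]; ring
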